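/- arXiv:2402.05560 — 4 statements merged into one kernel-verified Lean document; each statement's English description precedes it below -/
import Mathlib

section
/- For any full binary tree T, the augmented tree aug(T) satisfies EPT-sum(aug(T)) ≤ (3/2)·EPT-sum(T), where EPT-sum of a rooted tree is the sum over all leaves of their depths. -/
/-- Rooted trees where each internal node has one or two children. -/
inductive RTree : Type
  | leaf : RTree
  | uno : RTree → RTree
  | duo : RTree → RTree → RTree

namespace RTree

/-- Number of leaves. -/
def leaves : RTree → ℕ
  | leaf => 1
  | uno t => t.leaves
  | duo l r => l.leaves + r.leaves

/-- EPT-sum of a rooted tree: the sum over all leaves of their depths. -/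
def eptSum : RTree → ℕ
  | leaf => 0
  | uno t => t.eptSum + t.leaves
  | duo l r => l.eptSum + r.eptSum + (l.leaves + r.leaves)

/-- A full binary tree: every internal node has exactly two children. -/
def IsFullBinary : RTree → Prop
  | leaf => True
  | uno _ => False
  | duo l r => l.IsFullBinary ∧ r.IsFullBinary

/-- The augmented tree: for each internal node, the edge to a child whose
subtree has at most as many leaves as the other child's subtree is
subdivided once. -/
def aug : RTree → RTree
  | leaf => leaf
  | uno t => uno t.aug
  | duo l r =>
      if r.leaves ≤ l.leaves then duo l.aug (uno r.aug) else duo (uno l.aug) r.aug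

theorem leaves_aug (t : RTree) : t.aug.leaves = t.leaves := by
  induction t with
  | leaf => rfl
  | uno t ih => simpa [aug, leaves] using ih
  | duo l r ihl ihr =>
      by_cases h : r.leaves ≤ l.leaves <;> simp [aug, leaves, h, ihl, ihr]

theorem two_mul_eptSum_aug_le (t : RTree) : 2 * t.aug.eptSum ≤ 3 * t.eptSum := by
  induction t with
  | leaf => simp [aug, eptSum]
  | uno t ih => simp only [aug, eptSum, leaves_aug]; omega
  | duo l r ihl ihr =>
      by_cases h : r.leaves ≤ l.leaves <;>
        simp only [aug, eptSum, leaves, leaves_aug, if_pos, if_neg, h, if_true, if_false] <;>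
        omega

end RTree

/-- For any full binary tree `T`, `EPT-sum(aug(T)) ≤ (3/2) · EPT-sum(T)`. -/
theorem eptSum_aug_le (T : RTree) (hT : T.IsFullBinary) :
    (T.aug.eptSum : ℚ) ≤ 3 / 2 * T.eptSum := by
  have h := T.two_mul_eptSum_aug_le
  have : (2 * T.aug.eptSum : ℚ) ≤ 3 * T.eptSum := by exact_mod_cast h
  linarith
end

section
/- Let G be a tree with at least two vertices, let c be a centroid of G, and let e be a balanced edge of G (an edge minimizing the number of vertices in the largest component of G \ e). Then e is incident on c. -/
/-- The subgraph of `G` obtained by deleting the edge `uv`. -/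
noncomputable def delEdge {V : Type*} (G : SimpleGraph V) (u v : V) : SimpleGraph V :=
  G.deleteEdges {s(u, v)}

/-- The weight (size of the larger of the two components) of the cut given by
the edge `uv` of a tree `G`. -/
noncomputable def cutWeight {V : Type*} (G : SimpleGraph V) (u v : V) : ℕ :=
  max ((delEdge G u v).connectedComponentMk u).supp.ncard
      ((delEdge G u v).connectedComponentMk v).supp.ncard

open SimpleGraph

section Aux

variable {V : Type*}

lemma delEdge_le (G : SimpleGraph V) (u v : V) : delEdge G u v ≤ G :=
  SimpleGraph.deleteEdges_le _

lemma delEdge_comm (G : SimpleGraph V) (u v : V) : delEdge G u v = delEdge G v u := by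
  unfold delEdge
  rw [Sym2.eq_swap]

lemma cutWeight_comm (G : SimpleGraph V) (u v : V) : cutWeight G u v = cutWeight G v u := by
  unfold cutWeight
  rw [delEdge_comm, max_comm]

lemma not_adj_delEdge (G : SimpleGraph V) (u v : V) : ¬ (delEdge G u v).Adj u v := by
  simp [delEdge]

lemma reach_or_aux {G : SimpleGraph V} {u v : V} : ∀ {x y : V}, G.Walk x y →
    (delEdge G u v).Reachable x y ∨ (delEdge G u v).Reachable x u ∨
      (delEdge G u v).Reachable x v := by
  intro x y p
  induction p with
  | nil => exact Or.inl (Reachable.refl _)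
  | @cons a b _ h q ih =>
    by_cases he : s(a, b) = s(u, v)
    · rw [Sym2.eq_iff] at he
      rcases he with ⟨rfl, rfl⟩ | ⟨rfl, rfl⟩
      · exact Or.inr (Or.inl (Reachable.refl _))
      · exact Or.inr (Or.inr (Reachable.refl _))
    · have hadj : (delEdge G u v).Adj a b := by
        simp only [delEdge, SimpleGraph.deleteEdges_adj, Set.mem_singleton_iff]
        exact ⟨h, he⟩
      rcases ih with h1 | h1 | h1
      · exact Or.inl (hadj.reachable.trans h1)
      · exact Or.inr (Or.inl (hadj.reachable.trans h1))
      · exact Or.inr (Or.inr (hadj.reachable.trans h1))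

/-- Every vertex is in the component of `u` or of `v` after deleting edge `uv`. -/
lemma reach_or {G : SimpleGraph V} {u v x : V} (p : G.Walk x u) :
    (delEdge G u v).Reachable x u ∨ (delEdge G u v).Reachable x v := by
  rcases reach_or_aux (v := v) p with h | h | h
  · exact Or.inl h
  · exact Or.inl h
  · exact Or.inr h

lemma tree_bridge {G : SimpleGraph V} (hG : G.IsTree) {u v : V} (huv : G.Adj u v) :
    ¬ (delEdge G u v).Reachable u v := by
  have hb := (isAcyclic_iff_forall_adj_isBridge.mp hG.IsAcyclic) huv
  exact isBridge_iff.mp hb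

/-- A walk in `delEdge G u v` avoiding `u` transfers to any `delEdge G u w`. -/
lemma transfer_reach {G : SimpleGraph V} {u v w x y : V} (p : (delEdge G u v).Walk x y)
    (hu : u ∉ p.support) : (delEdge G u w).Reachable x y := by
  refine ⟨p.transfer (delEdge G u w) ?_⟩
  intro e he
  have h1 : e ∈ (delEdge G u v).edgeSet := p.edges_subset_edgeSet he
  have h2 : e ∈ G.edgeSet := (SimpleGraph.edgeSet_subset_edgeSet.mpr (delEdge_le G u v)) h1
  rw [delEdge, SimpleGraph.edgeSet_deleteEdges]
  refine ⟨h2, ?_⟩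
  simp only [Set.mem_singleton_iff]
  rintro rfl
  exact hu (p.fst_mem_support_of_mem_edges he)

/-- A walk in a subgraph whose support lies in `s` gives reachability in `G.induce s`. -/
lemma walk_induce {G G' : SimpleGraph V} (hle : G' ≤ G) {s : Set V} :
    ∀ {x y : V} (p : G'.Walk x y), (∀ z ∈ p.support, z ∈ s) →
    ∀ (hx : x ∈ s) (hy : y ∈ s), (G.induce s).Reachable ⟨x, hx⟩ ⟨y, hy⟩ := by
  intro x y p
  induction p with
  | nil => intro _ hx hy; exact Reachable.refl _
  | @cons a b _ h q ih =>
    intro hs hx hy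
    have hb : b ∈ s := hs b (by simp)
    have hadj : (G.induce s).Adj ⟨a, hx⟩ ⟨b, hb⟩ := by
      simp only [SimpleGraph.comap_adj, Function.Embedding.coe_subtype]
      exact hle h
    exact hadj.reachable.trans (ih (fun z hz => hs z (by simp [hz])) hb hy)

lemma supp_card_sum [Fintype V] {G : SimpleGraph V} (hG : G.IsTree) {u v : V}
    (huv : G.Adj u v) :
    ((delEdge G u v).connectedComponentMk u).supp.ncard +
      ((delEdge G u v).connectedComponentMk v).supp.ncard = Fintype.card V := by
  classical
  set A := ((delEdge G u v).connectedComponentMk u).supp with hA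
  set B := ((delEdge G u v).connectedComponentMk v).supp with hB
  have hbr := tree_bridge hG huv
  have hdisj : Disjoint A B := by
    rw [Set.disjoint_left]
    intro x hxA hxB
    rw [hA, ConnectedComponent.mem_supp_iff, ConnectedComponent.eq] at hxA
    rw [hB, ConnectedComponent.mem_supp_iff, ConnectedComponent.eq] at hxB
    exact hbr (hxA.symm.trans hxB)
  have hcover : A ∪ B = Set.univ := by
    ext x
    simp only [Set.mem_union, Set.mem_univ, iff_true]
    obtain ⟨p⟩ := hG.isConnected.preconnected x u
    rcases reach_or (v := v) p with h1 | h1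
    · left; rw [hA, ConnectedComponent.mem_supp_iff, ConnectedComponent.eq]; exact h1
    · right; rw [hB, ConnectedComponent.mem_supp_iff, ConnectedComponent.eq]; exact h1
  have hu := Set.ncard_union_eq hdisj (Set.toFinite A) (Set.toFinite B)
  rw [hcover, Set.ncard_univ, Nat.card_eq_fintype_card] at hu
  omega

lemma main_aux {V : Type*} [Fintype V]
    (G : SimpleGraph V) (hG : G.IsTree)
    (c : V)
    (hc : ∀ K : (G.induce {v : V | v ≠ c}).ConnectedComponent,
      2 * K.supp.ncard ≤ Fintype.card V)
    (u v : V) (huv : G.Adj u v)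
    (hbal : ∀ a b : V, G.Adj a b → cutWeight G u v ≤ cutWeight G a b)
    (hcu : (delEdge G u v).Reachable u c) : u = c := by
  classical
  by_contra hne
  obtain ⟨p0⟩ := hcu
  obtain ⟨w, h, q, hq⟩ := Walk.exists_eq_cons_of_ne hne p0.bypass
  have hpath : (Walk.cons h q).IsPath := hq ▸ p0.bypass_isPath
  have huq : u ∉ q.support := (Walk.cons_isPath_iff h q).mp hpath |>.2
  have hGuw : G.Adj u w := delEdge_le G u v h
  have hwv : w ≠ v := fun e => not_adj_delEdge G u v (e ▸ h)
  have hsne : s(u, v) ≠ s(u, w) := fun e => hwv (Sym2.congr_right.mp e).symm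
  have hbr_uv := tree_bridge hG huv
  have hbr_uw := tree_bridge hG hGuw
  -- c is reachable from w after deleting edge uw
  have hwc : (delEdge G u w).Reachable w c := transfer_reach q huq
  -- vertices reachable to v (avoiding edge uv) remain reachable to v after deleting uw
  have key : ∀ x : V, (delEdge G u v).Reachable x v → (delEdge G u w).Reachable x v := by
    intro x hx
    obtain ⟨r⟩ := hx
    have hur : u ∉ r.support := fun hu => hbr_uv ⟨r.dropUntil u hu⟩
    exact transfer_reach r hur
  have hadj_uv' : (delEdge G u w).Adj u v := by
    simp only [delEdge, SimpleGraph.deleteEdges_adj, Set.mem_singleton_iff]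
    exact ⟨huv, hsne⟩
  set nA := ((delEdge G u v).connectedComponentMk u).supp.ncard with hnA
  set nB := ((delEdge G u v).connectedComponentMk v).supp.ncard with hnB
  set nB' := ((delEdge G u w).connectedComponentMk u).supp.ncard with hnB'
  set nA' := ((delEdge G u w).connectedComponentMk w).supp.ncard with hnA'
  have hsum1 : nA + nB = Fintype.card V := supp_card_sum hG huv
  have hsum2 : nB' + nA' = Fintype.card V := supp_card_sum hG hGuw
  -- the v-side grows by at least one (it gains u)
  have huB : u ∉ ((delEdge G u v).connectedComponentMk v).supp := by
    rw [ConnectedComponent.mem_supp_iff, ConnectedComponent.eq]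
    exact hbr_uv
  have hinsert : insert u ((delEdge G u v).connectedComponentMk v).supp ⊆
      ((delEdge G u w).connectedComponentMk u).supp := by
    intro x hx
    rw [ConnectedComponent.mem_supp_iff, ConnectedComponent.eq]
    rcases Set.mem_insert_iff.mp hx with rfl | hx
    · exact Reachable.refl _
    · rw [ConnectedComponent.mem_supp_iff, ConnectedComponent.eq] at hx
      exact (key x hx).trans hadj_uv'.symm.reachable
  have hcard : nB + 1 ≤ nB' := by
    have h1 := Set.ncard_le_ncard hinsert (Set.toFinite _)
    rwa [Set.ncard_insert_of_notMem huB (Set.toFinite _)] at h1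
  -- u's component after deleting uw avoids c
  have hcB' : ¬ (delEdge G u w).Reachable u c := fun hr => hbr_uw (hr.trans hwc.symm)
  -- bound the size of u's component via the centroid hypothesis
  have h2B' : 2 * nB' ≤ Fintype.card V := by
    have hu_ne : u ∈ {v : V | v ≠ c} := hne
    set K := (G.induce {v : V | v ≠ c}).connectedComponentMk ⟨u, hu_ne⟩ with hK
    have hsub : ((delEdge G u w).connectedComponentMk u).supp ⊆ Subtype.val '' K.supp := by
      intro x hx
      rw [ConnectedComponent.mem_supp_iff, ConnectedComponent.eq] at hx
      obtain ⟨r⟩ := hx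
      have hcr : ∀ z ∈ r.support, z ∈ {v : V | v ≠ c} := by
        intro z hz
        simp only [Set.mem_setOf_eq]
        rintro rfl
        exact hcB' (Reachable.symm ⟨r.dropUntil z hz⟩)
      have hx_ne : x ∈ {v : V | v ≠ c} := hcr x r.start_mem_support
      have hreach := walk_induce (delEdge_le G u w) r hcr hx_ne hu_ne
      refine ⟨⟨x, hx_ne⟩, ?_, rfl⟩
      rw [ConnectedComponent.mem_supp_iff, hK, ConnectedComponent.eq]
      exact hreach
    have hle1 : nB' ≤ (Subtype.val '' K.supp).ncard :=
      Set.ncard_le_ncard hsub (Set.toFinite _)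
    rw [Set.ncard_image_of_injective _ Subtype.val_injective] at hle1
    have := hc K
    omega
  -- conclude by arithmetic
  have hmax := hbal u w hGuw
  unfold cutWeight at hmax
  rw [← hnA, ← hnB, ← hnB', ← hnA'] at hmax
  have h1 : nB' ≤ nA' := by omega
  rw [max_eq_right h1] at hmax
  have h3 : nA ≤ max nA nB := le_max_left _ _
  omega

end Aux

/-- In a tree with at least two vertices, every balanced edge (an edge
minimizing the size of the largest component of `G \ e`) is incident on any
centroid `c`. -/
theorem balanced_edge_incident_centroid {V : Type*} [Fintype V]
    (G : SimpleGraph V) (hG : G.IsTree) (hn : 2 ≤ Fintype.card V)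
    (c : V)
    (hc : ∀ K : (G.induce {v : V | v ≠ c}).ConnectedComponent,
      2 * K.supp.ncard ≤ Fintype.card V)
    (u v : V) (huv : G.Adj u v)
    (hbal : ∀ a b : V, G.Adj a b → cutWeight G u v ≤ cutWeight G a b) :
    u = c ∨ v = c := by
  obtain ⟨p⟩ := hG.isConnected.preconnected c u
  rcases reach_or (v := v) p with h1 | h1
  · exact Or.inl (main_aux G hG c hc u v huv hbal h1.symm)
  · refine Or.inr (main_aux G hG c hc v u huv.symm ?_ ?_)
    · intro a b hab
      rw [cutWeight_comm G v u]
      exact hbal a b hab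
    · rw [← delEdge_comm]
      exact h1.symm
end

section
/- Let G be a tree, T an EPT of G, uv ∈ E(G), and (T^u, T^v) the splitting of T along uv. Then T^u is an EPT of the component G_u of G \ uv containing u, and T^v is an EPT of the component G_v containing v. -/
open scoped Classical

/-- Rooted trees whose leaves are labelled by vertices and whose internal
nodes are labelled by (potential) edges, each internal node having one or two
children. -/
inductive LTree (V : Type*) : Type _
  | leaf : V → LTree V
  | node1 : Sym2 V → LTree V → LTree V
  | node2 : Sym2 V → LTree V → LTree V → LTree V

variable {V : Type*}

/-- The graph `G` restricted to the vertex set `S`, with the edges in `D`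
deleted (all vertices outside `S` become isolated). -/
def cutG (G : SimpleGraph V) (S : Set V) (D : Set (Sym2 V)) : SimpleGraph V where
  Adj a b := G.Adj a b ∧ a ∈ S ∧ b ∈ S ∧ s(a, b) ∉ D
  symm := by
    constructor
    intro a b h
    exact ⟨h.1.symm, h.2.2.1, h.2.1, by rw [Sym2.eq_swap]; exact h.2.2.2⟩
  loopless := by
    constructor
    intro a h
    exact G.irrefl h.1

/-- The vertex set of the connected component of `a` in `G[S]` minus the
edges `D`. -/
def comp (G : SimpleGraph V) (S : Set V) (D : Set (Sym2 V)) (a : V) : Set V :=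
  ((cutG G S D).connectedComponentMk a).supp

/-- `IsEPT G S D t` : `t` is an edge partition tree of the graph `G[S]` with
the edges in `D` removed.  A single vertex has the single-node EPT; otherwise
the root is an (available) edge `uv` of `G[S]`, and its children are EPTs of
the connected components of `G[S] \ uv`: one child if `uv` is not a bridge,
two children (one per component) if it is. -/
inductive IsEPT (G : SimpleGraph V) : Set V → Set (Sym2 V) → LTree V → Prop
  | leaf (v : V) (D : Set (Sym2 V)) : IsEPT G {v} D (.leaf v)
  | node1 (u v : V) (S : Set V) (D : Set (Sym2 V)) (t : LTree V)
      (hadj : G.Adj u v) (hu : u ∈ S) (hv : v ∈ S) (hD : s(u, v) ∉ D)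
      (hsame : comp G S (insert s(u, v) D) u = S)
      (ht : IsEPT G S (insert s(u, v) D) t) :
      IsEPT G S D (.node1 s(u, v) t)
  | node2 (u v : V) (S : Set V) (D : Set (Sym2 V)) (t₁ t₂ : LTree V)
      (hadj : G.Adj u v) (hu : u ∈ S) (hv : v ∈ S) (hD : s(u, v) ∉ D)
      (hdiff : ¬ (cutG G S (insert s(u, v) D)).Reachable u v)
      (hcover : comp G S (insert s(u, v) D) u ∪ comp G S (insert s(u, v) D) v = S)
      (h₁ : IsEPT G (comp G S (insert s(u, v) D) u) (insert s(u, v) D) t₁)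
      (h₂ : IsEPT G (comp G S (insert s(u, v) D) v) (insert s(u, v) D) t₂) :
      IsEPT G S D (.node2 s(u, v) t₁ t₂)

/-- The splitting operation: `restrict S t` reattaches every node of `t`
whose label lies within `S` (a leaf labelled by a vertex of `S`, or an
internal node labelled by an edge with both endpoints in `S`) to its lowest
ancestor whose label lies within `S`; nodes with no such ancestor become the
root.  It returns `none` when no node of `t` lies within `S`.
(For the valid inputs considered here, at most one of the two children of a
surviving internal node can have leaves in `S` unless the node itself
survives, so the result is again a binary tree.) -/
noncomputable def restrict (S : Set V) : LTree V → Option (LTree V)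
  | .leaf v => if v ∈ S then some (.leaf v) else none
  | .node1 e t =>
      match restrict S t with
      | none => none
      | some a => if ∀ x ∈ e, x ∈ S then some (.node1 e a) else some a
  | .node2 e l r =>
      match restrict S l, restrict S r with
      | none, none => none
      | some a, none => if ∀ x ∈ e, x ∈ S then some (.node1 e a) else some a
      | none, some b => if ∀ x ∈ e, x ∈ S then some (.node1 e b) else some b
      | some a, some b => some (.node2 e a b)


section SplitHelpers

variable {V : Type*} {G : SimpleGraph V} {u₀ v₀ : V} {Su : Set V}

lemma cutG_adj {S : Set V} {D : Set (Sym2 V)} {a b : V} :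
    (cutG G S D).Adj a b ↔ G.Adj a b ∧ a ∈ S ∧ b ∈ S ∧ s(a, b) ∉ D := Iff.rfl

lemma mem_comp_iff {S : Set V} {D : Set (Sym2 V)} {a x : V} :
    x ∈ comp G S D a ↔ (cutG G S D).Reachable x a := by
  rw [comp, SimpleGraph.ConnectedComponent.mem_supp_iff, SimpleGraph.ConnectedComponent.eq]

lemma reach_mem {W : Set V} {D₀ : Set (Sym2 V)} {a x : V}
    (h : (cutG G W D₀).Reachable a x) : x = a ∨ x ∈ W := by
  obtain ⟨w⟩ := h
  induction w with
  | nil => exact Or.inl rfl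
  | @cons a c x h p ih =>
    rcases ih with rfl | hx
    · exact Or.inr h.2.2.1
    · exact Or.inr hx

/-- any walk from outside `Su` to inside `Su` uses the edge `s(u₀,v₀)`. -/
lemma walk_cross (hgood : ∀ ⦃a b⦄, G.Adj a b → s(a, b) ≠ s(u₀, v₀) → (a ∈ Su ↔ b ∈ Su))
    {H : SimpleGraph V} (hle : ∀ ⦃a b⦄, H.Adj a b → G.Adj a b) :
    ∀ {a b : V} (w : H.Walk a b), a ∉ Su → b ∈ Su → s(u₀, v₀) ∈ w.edges := by
  intro a b w
  induction w with
  | nil => intro ha hb; exact absurd hb ha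
  | @cons a c b h p ih =>
    intro ha hb
    rw [SimpleGraph.Walk.edges_cons]
    by_cases hc : c ∈ Su
    · have : s(a, c) = s(u₀, v₀) := by
        by_contra hne
        exact ha ((hgood (hle h) hne).mpr hc)
      exact this ▸ List.mem_cons_self
    · exact List.mem_cons_of_mem _ (ih hc hb)

lemma reach_transfer (hgood : ∀ ⦃a b⦄, G.Adj a b → s(a, b) ≠ s(u₀, v₀) → (a ∈ Su ↔ b ∈ Su))
    {H₁ H₂ : SimpleGraph V}
    (hle : ∀ ⦃a b⦄, H₁.Adj a b → G.Adj a b)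
    (hmap : ∀ ⦃a b⦄, H₁.Adj a b → a ∈ Su → b ∈ Su → H₂.Adj a b)
    {a b : V} (ha : a ∈ Su) (hb : b ∈ Su) (h : H₁.Reachable a b) :
    H₂.Reachable a b := by
  classical
  suffices haux : ∀ {x y : V} (p : H₁.Walk x y), p.edges.Nodup → x ∈ Su → y ∈ Su →
      H₂.Reachable x y by
    obtain ⟨w⟩ := h
    exact haux (w.toPath : H₁.Walk a b) (SimpleGraph.Walk.toPath w).2.isTrail.edges_nodup ha hb
  intro x y p
  induction p with
  | nil => intro _ _ _; exact SimpleGraph.Reachable.refl _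
  | @cons x c y h p ih =>
    intro hnd hx hy
    rw [SimpleGraph.Walk.edges_cons, List.nodup_cons] at hnd
    by_cases hc : c ∈ Su
    · exact ((hmap h hx hc).reachable).trans (ih hnd.2 hc hy)
    · have hne : s(x, c) = s(u₀, v₀) := by
        by_contra hne
        exact hc ((hgood (hle h) hne).mp hx)
      exact absurd (hne ▸ walk_cross hgood hle p hc hy) hnd.1

/-- reachability in a subgraph avoiding the split edge preserves sides. -/
lemma reach_su_iff' (hgood : ∀ ⦃a b⦄, G.Adj a b → s(a, b) ≠ s(u₀, v₀) → (a ∈ Su ↔ b ∈ Su))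
    {H : SimpleGraph V} (hle : ∀ ⦃a b⦄, H.Adj a b → G.Adj a b)
    (hne : ∀ ⦃a b⦄, H.Adj a b → s(a, b) ≠ s(u₀, v₀))
    {x y : V} (h : H.Reachable x y) : (x ∈ Su ↔ y ∈ Su) := by
  obtain ⟨w⟩ := h
  induction w with
  | nil => exact Iff.rfl
  | @cons x c y h p ih => exact (hgood (hle h) (hne h)).trans ih

/-- reachability from a vertex not connected to `u₀` preserves sides. -/
lemma reach_su_iff (hgood : ∀ ⦃a b⦄, G.Adj a b → s(a, b) ≠ s(u₀, v₀) → (a ∈ Su ↔ b ∈ Su))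
    {H : SimpleGraph V} (hle : ∀ ⦃a b⦄, H.Adj a b → G.Adj a b)
    {b x : V} (hnu : ¬ H.Reachable b u₀) (h : H.Reachable b x) : (x ∈ Su ↔ b ∈ Su) := by
  obtain ⟨w⟩ := h
  revert hnu
  induction w with
  | nil => intro _; exact Iff.rfl
  | @cons b c x h p ih =>
    intro hnu
    have hne : s(b, c) ≠ s(u₀, v₀) := by
      intro he
      rcases Sym2.eq_iff.mp he with ⟨rfl, rfl⟩ | ⟨rfl, rfl⟩
      · exact hnu (SimpleGraph.Reachable.refl _)
      · exact hnu h.reachable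
    have hnc : ¬ H.Reachable c u₀ := fun hr => hnu (h.reachable.trans hr)
    exact (ih hnc).trans (hgood (hle h) hne).symm

end SplitHelpers

section RestrictHelpers

variable {V : Type*} {G : SimpleGraph V}

lemma restrict_none {W S : Set V} {D : Set (Sym2 V)} {t : LTree V}
    (h : IsEPT G S D t) (hW : ∀ x ∈ S, x ∉ W) : restrict W t = none := by
  induction h with
  | leaf v D => simp [restrict, hW v rfl]
  | node1 u v S D t hadj hu hv hD hsame ht ih =>
    simp only [restrict, ih hW]
  | node2 u v S D t₁ t₂ hadj hu hv hD hdiff hcover h₁ h₂ ih₁ ih₂ =>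
    have hc1 : ∀ x ∈ comp G S (insert s(u, v) D) u, x ∉ W := by
      intro x hx; exact hW x (by rw [← hcover]; exact Or.inl hx)
    have hc2 : ∀ x ∈ comp G S (insert s(u, v) D) v, x ∉ W := by
      intro x hx; exact hW x (by rw [← hcover]; exact Or.inr hx)
    simp only [restrict, ih₁ hc1, ih₂ hc2]

lemma restrict_all {W S : Set V} {D : Set (Sym2 V)} {t : LTree V}
    (h : IsEPT G S D t) (hW : ∀ x ∈ S, x ∈ W) : restrict W t = some t := by
  induction h with
  | leaf v D => simp [restrict, hW v rfl]
  | node1 u v S D t hadj hu hv hD hsame ht ih =>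
    have hcond : ∀ x ∈ s(u, v), x ∈ W := by
      intro x hx
      rcases Sym2.mem_iff.mp hx with rfl | rfl
      exacts [hW x hu, hW x hv]
    simp only [restrict, ih hW]
    rw [if_pos hcond]
  | node2 u v S D t₁ t₂ hadj hu hv hD hdiff hcover h₁ h₂ ih₁ ih₂ =>
    have hc1 : ∀ x ∈ comp G S (insert s(u, v) D) u, x ∈ W := by
      intro x hx; exact hW x (by rw [← hcover]; exact Or.inl hx)
    have hc2 : ∀ x ∈ comp G S (insert s(u, v) D) v, x ∈ W := by
      intro x hx; exact hW x (by rw [← hcover]; exact Or.inr hx)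
    simp only [restrict, ih₁ hc1, ih₂ hc2]

lemma restrict_congr {W₁ W₂ S : Set V} {D : Set (Sym2 V)} {t : LTree V}
    (h : IsEPT G S D t) (hW : ∀ x ∈ S, (x ∈ W₁ ↔ x ∈ W₂)) :
    restrict W₁ t = restrict W₂ t := by
  induction h with
  | leaf v D =>
    simp only [restrict]
    rw [show (v ∈ W₁) = (v ∈ W₂) from propext (hW v rfl)]
  | node1 u v S D t hadj hu hv hD hsame ht ih =>
    have hcond : (∀ x ∈ s(u, v), x ∈ W₁) = (∀ x ∈ s(u, v), x ∈ W₂) := by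
      have hmem : ∀ x ∈ s(u, v), x ∈ S := by
        intro x hx; rcases Sym2.mem_iff.mp hx with rfl | rfl; exacts [hu, hv]
      apply propext
      exact ⟨fun h' x hx => (hW x (hmem x hx)).mp (h' x hx),
             fun h' x hx => (hW x (hmem x hx)).mpr (h' x hx)⟩
    simp only [restrict, ih hW, hcond]
  | node2 u v S D t₁ t₂ hadj hu hv hD hdiff hcover h₁ h₂ ih₁ ih₂ =>
    have hc1 : ∀ x ∈ comp G S (insert s(u, v) D) u, (x ∈ W₁ ↔ x ∈ W₂) := by
      intro x hx; exact hW x (by rw [← hcover]; exact Or.inl hx)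
    have hc2 : ∀ x ∈ comp G S (insert s(u, v) D) v, (x ∈ W₁ ↔ x ∈ W₂) := by
      intro x hx; exact hW x (by rw [← hcover]; exact Or.inr hx)
    have hcond : (∀ x ∈ s(u, v), x ∈ W₁) = (∀ x ∈ s(u, v), x ∈ W₂) := by
      have hmem : ∀ x ∈ s(u, v), x ∈ S := by
        intro x hx; rcases Sym2.mem_iff.mp hx with rfl | rfl; exacts [hu, hv]
      apply propext
      exact ⟨fun h' x hx => (hW x (hmem x hx)).mp (h' x hx),
             fun h' x hx => (hW x (hmem x hx)).mpr (h' x hx)⟩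
    simp only [restrict, ih₁ hc1, ih₂ hc2, hcond]

lemma cutG_congr {S : Set V} {D₁ D₂ : Set (Sym2 V)}
    (h : ∀ ⦃p q⦄, G.Adj p q → p ∈ S → q ∈ S → (s(p, q) ∈ D₁ ↔ s(p, q) ∈ D₂)) :
    cutG G S D₁ = cutG G S D₂ := by
  ext a b
  exact and_congr_right fun hadj => and_congr_right fun ha => and_congr_right fun hb =>
    not_congr (h hadj ha hb)

lemma ept_congr_D {S : Set V} {D₁ : Set (Sym2 V)} {t : LTree V} (h : IsEPT G S D₁ t) :
    ∀ D₂, (∀ ⦃p q⦄, G.Adj p q → p ∈ S → q ∈ S → (s(p, q) ∈ D₁ ↔ s(p, q) ∈ D₂)) →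
    IsEPT G S D₂ t := by
  induction h with
  | leaf v D => exact fun D₂ _ => .leaf v D₂
  | node1 u v S D t hadj hu hv hD hsame ht ih =>
    intro D₂ hcong
    have hins : ∀ ⦃p q⦄, G.Adj p q → p ∈ S → q ∈ S →
        (s(p, q) ∈ insert s(u, v) D ↔ s(p, q) ∈ insert s(u, v) D₂) := by
      intro p q hpq hp hq
      simp only [Set.mem_insert_iff]
      exact or_congr_right (hcong hpq hp hq)
    have hcut : cutG G S (insert s(u, v) D) = cutG G S (insert s(u, v) D₂) := cutG_congr hins
    have hcomp : comp G S (insert s(u, v) D) u = comp G S (insert s(u, v) D₂) u := by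
      rw [comp, comp, hcut]
    exact .node1 u v S D₂ t hadj hu hv (fun hx => hD ((hcong hadj hu hv).mpr hx))
      (hcomp ▸ hsame) (ih _ hins)
  | node2 u v S D t₁ t₂ hadj hu hv hD hdiff hcover h₁ h₂ ih₁ ih₂ =>
    intro D₂ hcong
    have hins : ∀ ⦃p q⦄, G.Adj p q → p ∈ S → q ∈ S →
        (s(p, q) ∈ insert s(u, v) D ↔ s(p, q) ∈ insert s(u, v) D₂) := by
      intro p q hpq hp hq
      simp only [Set.mem_insert_iff]
      exact or_congr_right (hcong hpq hp hq)
    have hcut : cutG G S (insert s(u, v) D) = cutG G S (insert s(u, v) D₂) := cutG_congr hins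
    have hcompu : comp G S (insert s(u, v) D) u = comp G S (insert s(u, v) D₂) u := by
      rw [comp, comp, hcut]
    have hcompv : comp G S (insert s(u, v) D) v = comp G S (insert s(u, v) D₂) v := by
      rw [comp, comp, hcut]
    have hsubu : comp G S (insert s(u, v) D) u ⊆ S := by
      intro x hx; rw [← hcover]; exact Or.inl hx
    have hsubv : comp G S (insert s(u, v) D) v ⊆ S := by
      intro x hx; rw [← hcover]; exact Or.inr hx
    refine .node2 u v S D₂ t₁ t₂ hadj hu hv (fun hx => hD ((hcong hadj hu hv).mpr hx))
      (hcut ▸ hdiff) (by rw [← hcompu, ← hcompv, hcover]) ?_ ?_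
    · exact hcompu ▸ ih₁ _ (fun p q hpq hp hq => hins hpq (hsubu hp) (hsubu hq))
    · exact hcompv ▸ ih₂ _ (fun p q hpq hp hq => hins hpq (hsubv hp) (hsubv hq))

end RestrictHelpers

section Transfer

variable {V : Type*} {G : SimpleGraph V} {u₀ v₀ : V} {Su : Set V}

lemma comp_transfer (hgood : ∀ ⦃a b⦄, G.Adj a b → s(a, b) ≠ s(u₀, v₀) → (a ∈ Su ↔ b ∈ Su))
    {S : Set V} {D₁ D₂ : Set (Sym2 V)}
    (hsub : D₂ ⊆ D₁) (hmem : ∀ f ∈ D₁, (∀ x ∈ f, x ∈ Su) → f ∈ D₂)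
    {a : V} (ha : a ∈ Su) (haS : a ∈ S) :
    comp G (Su ∩ S) D₂ a = Su ∩ comp G S D₁ a := by
  have hle12 : ∀ ⦃p q⦄, (cutG G (Su ∩ S) D₂).Adj p q → (cutG G S D₁).Adj p q := by
    intro p q hpq
    refine ⟨hpq.1, hpq.2.1.2, hpq.2.2.1.2, fun hd => hpq.2.2.2 (hmem _ hd ?_)⟩
    intro x hx
    rcases Sym2.mem_iff.mp hx with rfl | rfl
    exacts [hpq.2.1.1, hpq.2.2.1.1]
  ext x
  simp only [Set.mem_inter_iff, mem_comp_iff]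
  constructor
  · intro h
    have h' : (cutG G S D₁).Reachable x a := by
      obtain ⟨w⟩ := h
      exact ⟨w.mapLe hle12⟩
    refine ⟨?_, h'⟩
    rcases reach_mem h.symm with rfl | hx
    exacts [ha, hx.1]
  · rintro ⟨hxSu, hreach⟩
    refine reach_transfer (H₁ := cutG G S D₁) (H₂ := cutG G (Su ∩ S) D₂) hgood
      (fun p q h => h.1) ?_ hxSu ha hreach
    intro p q h hp hq
    exact ⟨h.1, ⟨hp, h.2.1⟩, ⟨hq, h.2.2.1⟩, fun hd => h.2.2.2 (hsub hd)⟩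

end Transfer

section MainSplit

variable {V : Type*} {G : SimpleGraph V} {u₀ v₀ : V} {Su : Set V}

lemma main_split (hgood : ∀ ⦃a b⦄, G.Adj a b → s(a, b) ≠ s(u₀, v₀) → (a ∈ Su ↔ b ∈ Su))
    (huv : G.Adj u₀ v₀) (hu₀ : u₀ ∈ Su) (hv₀ : v₀ ∉ Su)
    {S : Set V} {D : Set (Sym2 V)} {t : LTree V} (h : IsEPT G S D t) :
    u₀ ∈ S → v₀ ∈ S → s(u₀, v₀) ∉ D →
    ∃ t', restrict (Su ∩ S) t = some t' ∧
      IsEPT G (Su ∩ S) {f | f ∈ D ∧ ∀ x ∈ f, x ∈ Su} t' := by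
  induction h with
  | leaf w D =>
    intro hu hv _
    rw [Set.mem_singleton_iff] at hu hv
    exact absurd (hu.trans hv.symm) huv.ne
  | node1 a b S D t hadjE haS hbS hDe hsame ht ih =>
    intro hu hv hD
    have hne : s(a, b) ≠ s(u₀, v₀) := by
      intro he
      have hru : (cutG G S (insert s(a, b) D)).Reachable u₀ a :=
        mem_comp_iff.mp (by rw [hsame]; exact hu)
      have hrv : (cutG G S (insert s(a, b) D)).Reachable v₀ a :=
        mem_comp_iff.mp (by rw [hsame]; exact hv)
      obtain ⟨w⟩ := hrv.trans hru.symm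
      have hmem := walk_cross (H := cutG G S (insert s(a, b) D)) hgood
        (fun p q h => h.1) w hv₀ hu₀
      have hadj' := SimpleGraph.Walk.edges_subset_edgeSet w hmem
      rw [SimpleGraph.mem_edgeSet] at hadj'
      exact hadj'.2.2.2 (by rw [← he]; exact Set.mem_insert _ _)
    have hD' : s(u₀, v₀) ∉ insert s(a, b) D := by
      intro h
      rcases Set.mem_insert_iff.mp h with he | hf
      · exact hne he.symm
      · exact hD hf
    obtain ⟨t', hres, hept⟩ := ih hu hv hD'
    by_cases hab : a ∈ Su ∧ b ∈ Su
    · refine ⟨.node1 s(a, b) t', ?_, ?_⟩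
      · simp only [restrict, hres]
        rw [if_pos]
        intro x hx
        rcases Sym2.mem_iff.mp hx with rfl | rfl
        exacts [⟨hab.1, haS⟩, ⟨hab.2, hbS⟩]
      · have hDins : {f | f ∈ insert s(a, b) D ∧ ∀ x ∈ f, x ∈ Su}
            = insert s(a, b) {f | f ∈ D ∧ ∀ x ∈ f, x ∈ Su} := by
          ext f
          simp only [Set.mem_insert_iff, Set.mem_setOf_eq]
          constructor
          · rintro ⟨he | hf, hins⟩
            · exact Or.inl he
            · exact Or.inr ⟨hf, hins⟩
          · rintro (rfl | ⟨hf, hins⟩)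
            · refine ⟨Or.inl rfl, ?_⟩
              intro x hx
              rcases Sym2.mem_iff.mp hx with rfl | rfl
              exacts [hab.1, hab.2]
            · exact ⟨Or.inr hf, hins⟩
        have hsub : insert s(a, b) {f | f ∈ D ∧ ∀ x ∈ f, x ∈ Su} ⊆ insert s(a, b) D := by
          rintro f (rfl | ⟨hf, _⟩)
          · exact Set.mem_insert _ _
          · exact Set.mem_insert_of_mem _ hf
        have hmm : ∀ f ∈ insert s(a, b) D, (∀ x ∈ f, x ∈ Su) →
            f ∈ insert s(a, b) {f | f ∈ D ∧ ∀ x ∈ f, x ∈ Su} := by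
          rintro f (rfl | hf) hins
          · exact Set.mem_insert _ _
          · exact Set.mem_insert_of_mem _ ⟨hf, hins⟩
        refine IsEPT.node1 a b _ _ t' hadjE ⟨hab.1, haS⟩ ⟨hab.2, hbS⟩
          (fun hx => hDe hx.1) ?_ ?_
        · rw [comp_transfer hgood hsub hmm hab.1 haS, hsame]
        · rw [← hDins]; exact hept
    · refine ⟨t', ?_, ?_⟩
      · have hnc : ¬ ∀ x ∈ s(a, b), x ∈ Su ∩ S := fun hall =>
          hab ⟨(hall a (Sym2.mem_iff.mpr (Or.inl rfl))).1,
               (hall b (Sym2.mem_iff.mpr (Or.inr rfl))).1⟩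
        simp only [restrict, hres]
        rw [if_neg hnc]
      · have hDrm : {f | f ∈ insert s(a, b) D ∧ ∀ x ∈ f, x ∈ Su}
            = {f | f ∈ D ∧ ∀ x ∈ f, x ∈ Su} := by
          ext f
          simp only [Set.mem_insert_iff, Set.mem_setOf_eq]
          constructor
          · rintro ⟨he | hf, hins⟩
            · exact absurd ⟨hins a (by rw [he]; exact Sym2.mem_iff.mpr (Or.inl rfl)),
                hins b (by rw [he]; exact Sym2.mem_iff.mpr (Or.inr rfl))⟩ hab
            · exact ⟨hf, hins⟩
          · rintro ⟨hf, hins⟩; exact ⟨Or.inr hf, hins⟩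
        rw [← hDrm]; exact hept
  | node2 a b S D t₁ t₂ hadjE haS hbS hDe hdiff hcover h₁ h₂ ih₁ ih₂ =>
    intro hu hv hD
    have hCaS : comp G S (insert s(a, b) D) a ⊆ S := by
      intro x hx; rw [← hcover]; exact Or.inl hx
    have hCbS : comp G S (insert s(a, b) D) b ⊆ S := by
      intro x hx; rw [← hcover]; exact Or.inr hx
    have hdisj : ∀ x, x ∈ comp G S (insert s(a, b) D) a →
        x ∈ comp G S (insert s(a, b) D) b → False := by
      intro x h1 h2
      exact hdiff ((mem_comp_iff.mp h1).symm.trans (mem_comp_iff.mp h2))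
    by_cases hE : s(a, b) = s(u₀, v₀)
    · rcases Sym2.eq_iff.mp hE with ⟨rfl, rfl⟩ | ⟨rfl, rfl⟩
      · -- a = u₀, b = v₀ (u₀,v₀ substituted by a,b)
        have hleH : ∀ ⦃p q⦄, (cutG G S (insert s(a, b) D)).Adj p q → G.Adj p q :=
          fun p q h => h.1
        have hneH : ∀ ⦃p q⦄, (cutG G S (insert s(a, b) D)).Adj p q →
            s(p, q) ≠ s(a, b) := by
          intro p q h he
          exact h.2.2.2 (by rw [he]; exact Set.mem_insert _ _)
        have hCaSu : ∀ x ∈ comp G S (insert s(a, b) D) a, x ∈ Su := by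
          intro x hx
          exact (reach_su_iff' hgood hleH hneH (mem_comp_iff.mp hx)).mpr hu₀
        have hCbSu : ∀ x ∈ comp G S (insert s(a, b) D) b, x ∉ Su := by
          intro x hx hxSu
          exact hv₀ ((reach_su_iff' hgood hleH hneH (mem_comp_iff.mp hx)).mp hxSu)
        have hS' : Su ∩ S = comp G S (insert s(a, b) D) a := by
          ext x
          constructor
          · rintro ⟨h1, h2⟩
            rw [← hcover] at h2
            rcases h2 with h2 | h2
            · exact h2
            · exact absurd h1 (hCbSu x h2)
          · intro hx
            exact ⟨hCaSu x hx, hCaS hx⟩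
        have hr₁ : restrict (Su ∩ S) t₁ = some t₁ := by
          rw [hS']; exact restrict_all h₁ (fun x hx => hx)
        have hr₂ : restrict (Su ∩ S) t₂ = none :=
          restrict_none h₂ (fun x hx hw => hCbSu x hx hw.1)
        refine ⟨t₁, ?_, ?_⟩
        · have hnc : ¬ ∀ x ∈ s(a, b), x ∈ Su ∩ S := fun hall =>
            hv₀ (hall b (Sym2.mem_iff.mpr (Or.inr rfl))).1
          simp only [restrict, hr₁, hr₂]
          rw [if_neg hnc]
        · rw [hS']
          refine ept_congr_D h₁ _ ?_
          intro p q hpq hp hq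
          simp only [Set.mem_insert_iff, Set.mem_setOf_eq]
          constructor
          · rintro (he | hf)
            · exfalso
              rcases Sym2.eq_iff.mp he with ⟨rfl, rfl⟩ | ⟨rfl, rfl⟩
              · exact hv₀ (hCaSu q hq)
              · exact hv₀ (hCaSu p hp)
            · refine ⟨hf, ?_⟩
              intro x hx
              rcases Sym2.mem_iff.mp hx with rfl | rfl
              exacts [hCaSu x hp, hCaSu x hq]
          · rintro ⟨hf, _⟩; exact Or.inr hf
      · -- a = v₀, b = u₀ (v₀,u₀ substituted by a,b)
        have hleH : ∀ ⦃p q⦄, (cutG G S (insert s(a, b) D)).Adj p q → G.Adj p q :=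
          fun p q h => h.1
        have hneH : ∀ ⦃p q⦄, (cutG G S (insert s(a, b) D)).Adj p q →
            s(p, q) ≠ s(b, a) := by
          intro p q h he
          exact h.2.2.2 (by rw [he, Sym2.eq_swap]; exact Set.mem_insert _ _)
        have hCbSu : ∀ x ∈ comp G S (insert s(a, b) D) b, x ∈ Su := by
          intro x hx
          exact (reach_su_iff' hgood hleH hneH (mem_comp_iff.mp hx)).mpr hu₀
        have hCaSu : ∀ x ∈ comp G S (insert s(a, b) D) a, x ∉ Su := by
          intro x hx hxSu
          exact hv₀ ((reach_su_iff' hgood hleH hneH (mem_comp_iff.mp hx)).mp hxSu)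
        have hS' : Su ∩ S = comp G S (insert s(a, b) D) b := by
          ext x
          constructor
          · rintro ⟨h1, h2⟩
            rw [← hcover] at h2
            rcases h2 with h2 | h2
            · exact absurd h1 (hCaSu x h2)
            · exact h2
          · intro hx
            exact ⟨hCbSu x hx, hCbS hx⟩
        have hr₂ : restrict (Su ∩ S) t₂ = some t₂ := by
          rw [hS']; exact restrict_all h₂ (fun x hx => hx)
        have hr₁ : restrict (Su ∩ S) t₁ = none :=
          restrict_none h₁ (fun x hx hw => hCaSu x hx hw.1)
        refine ⟨t₂, ?_, ?_⟩
        · have hnc : ¬ ∀ x ∈ s(a, b), x ∈ Su ∩ S := fun hall =>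
            hv₀ (hall a (Sym2.mem_iff.mpr (Or.inl rfl))).1
          simp only [restrict, hr₁, hr₂]
          rw [if_neg hnc]
        · rw [hS']
          refine ept_congr_D h₂ _ ?_
          intro p q hpq hp hq
          simp only [Set.mem_insert_iff, Set.mem_setOf_eq]
          constructor
          · rintro (he | hf)
            · exfalso
              rcases Sym2.eq_iff.mp he with ⟨rfl, rfl⟩ | ⟨rfl, rfl⟩
              · exact hv₀ (hCbSu p hp)
              · exact hv₀ (hCbSu q hq)
            · refine ⟨hf, ?_⟩
              intro x hx
              rcases Sym2.mem_iff.mp hx with rfl | rfl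
              exacts [hCbSu x hp, hCbSu x hq]
          · rintro ⟨hf, _⟩; exact Or.inr hf
    · -- s(a,b) ≠ s(u₀,v₀)
      have hne := hE
      have hDe₀ : s(u₀, v₀) ∉ insert s(a, b) D := by
        intro h
        rcases Set.mem_insert_iff.mp h with he | hf
        · exact hne he.symm
        · exact hD hf
      have habSu : a ∈ Su ↔ b ∈ Su := hgood hadjE hne
      have hadjH : (cutG G S (insert s(a, b) D)).Adj u₀ v₀ := ⟨huv, hu, hv, hDe₀⟩
      have hu₀S : u₀ ∈ comp G S (insert s(a, b) D) a ∨
          u₀ ∈ comp G S (insert s(a, b) D) b := by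
        have h' : u₀ ∈ S := hu
        rw [← hcover] at h'
        exact h'
      have hcomp_v₀ : ∀ c : V, u₀ ∈ comp G S (insert s(a, b) D) c →
          v₀ ∈ comp G S (insert s(a, b) D) c := by
        intro c hc
        exact mem_comp_iff.mpr ((hadjH.symm.reachable).trans (mem_comp_iff.mp hc))
      have hkey : ∀ c, u₀ ∉ comp G S (insert s(a, b) D) c →
          ∀ x ∈ comp G S (insert s(a, b) D) c, (x ∈ Su ↔ c ∈ Su) := by
        intro c hnu x hx
        have hnr : ¬ (cutG G S (insert s(a, b) D)).Reachable c u₀ := by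
          intro hr
          exact hnu (mem_comp_iff.mpr hr.symm)
        exact reach_su_iff (H := cutG G S (insert s(a, b) D)) hgood
          (fun p q h => h.1) hnr (mem_comp_iff.mp hx).symm
      by_cases hab : a ∈ Su
      · -- both endpoints inside Su : the node survives
        have hbSu : b ∈ Su := habSu.mp hab
        have hDins : {f | f ∈ insert s(a, b) D ∧ ∀ x ∈ f, x ∈ Su}
            = insert s(a, b) {f | f ∈ D ∧ ∀ x ∈ f, x ∈ Su} := by
          ext f
          simp only [Set.mem_insert_iff, Set.mem_setOf_eq]
          constructor
          · rintro ⟨he | hf, hins⟩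
            · exact Or.inl he
            · exact Or.inr ⟨hf, hins⟩
          · rintro (rfl | ⟨hf, hins⟩)
            · refine ⟨Or.inl rfl, ?_⟩
              intro x hx
              rcases Sym2.mem_iff.mp hx with rfl | rfl
              exacts [hab, hbSu]
            · exact ⟨Or.inr hf, hins⟩
        have hsub : insert s(a, b) {f | f ∈ D ∧ ∀ x ∈ f, x ∈ Su} ⊆ insert s(a, b) D := by
          rintro f (rfl | ⟨hf, _⟩)
          · exact Set.mem_insert _ _
          · exact Set.mem_insert_of_mem _ hf
        have hmm : ∀ f ∈ insert s(a, b) D, (∀ x ∈ f, x ∈ Su) →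
            f ∈ insert s(a, b) {f | f ∈ D ∧ ∀ x ∈ f, x ∈ Su} := by
          rintro f (rfl | hf) hins
          · exact Set.mem_insert _ _
          · exact Set.mem_insert_of_mem _ ⟨hf, hins⟩
        have hleH' : ∀ ⦃p q⦄,
            (cutG G (Su ∩ S) (insert s(a, b) {f | f ∈ D ∧ ∀ x ∈ f, x ∈ Su})).Adj p q →
            (cutG G S (insert s(a, b) D)).Adj p q := by
          intro p q hpq
          refine ⟨hpq.1, hpq.2.1.2, hpq.2.2.1.2, fun hd => hpq.2.2.2 (hmm _ hd ?_)⟩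
          intro x hx
          rcases Sym2.mem_iff.mp hx with rfl | rfl
          exacts [hpq.2.1.1, hpq.2.2.1.1]
        have hcA := comp_transfer (D₁ := insert s(a, b) D) hgood hsub hmm hab haS
        have hcB := comp_transfer (D₁ := insert s(a, b) D) hgood hsub hmm hbSu hbS
        rcases hu₀S with hu₀a | hu₀b
        · -- u₀ on the a-side
          obtain ⟨t₁', hr₁, he₁⟩ := ih₁ hu₀a (hcomp_v₀ a hu₀a) hDe₀
          have hu₀Cb : u₀ ∉ comp G S (insert s(a, b) D) b := fun h => hdisj u₀ hu₀a h
          have hCb_in : ∀ x ∈ comp G S (insert s(a, b) D) b, x ∈ Su := by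
            intro x hx
            exact (hkey b hu₀Cb x hx).mpr hbSu
          have hrA : restrict (Su ∩ S) t₁ = some t₁' := by
            have hcg := restrict_congr (W₁ := Su ∩ S)
              (W₂ := Su ∩ comp G S (insert s(a, b) D) a) h₁
              (fun x hx => ⟨fun h => ⟨h.1, hx⟩, fun h => ⟨h.1, hCaS hx⟩⟩)
            exact hcg.trans hr₁
          have hrB : restrict (Su ∩ S) t₂ = some t₂ := by
            have hcg := restrict_congr (W₁ := Su ∩ S)
              (W₂ := comp G S (insert s(a, b) D) b) h₂
              (fun x hx => ⟨fun _ => hx, fun _ => ⟨hCb_in x hx, hCbS hx⟩⟩)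
            exact hcg.trans (restrict_all h₂ (fun x hx => hx))
          have hCbeq : Su ∩ comp G S (insert s(a, b) D) b
              = comp G S (insert s(a, b) D) b :=
            Set.inter_eq_right.mpr hCb_in
          refine ⟨.node2 s(a, b) t₁' t₂, by simp only [restrict, hrA, hrB], ?_⟩
          refine IsEPT.node2 a b _ _ t₁' t₂ hadjE ⟨hab, haS⟩ ⟨hbSu, hbS⟩
            (fun hx => hDe hx.1) ?_ ?_ ?_ ?_
          · intro hr
            apply hdiff
            obtain ⟨w⟩ := hr
            exact ⟨w.mapLe hleH'⟩
          · rw [hcA, hcB, ← Set.inter_union_distrib_left, hcover]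
          · rw [hcA, ← hDins]; exact he₁
          · rw [hcB, hCbeq]
            refine ept_congr_D h₂ _ ?_
            intro p q hpq hp hq
            simp only [Set.mem_insert_iff, Set.mem_setOf_eq]
            constructor
            · rintro (he | hf)
              · exact Or.inl he
              · refine Or.inr ⟨hf, ?_⟩
                intro x hx
                rcases Sym2.mem_iff.mp hx with rfl | rfl
                exacts [hCb_in x hp, hCb_in x hq]
            · rintro (he | ⟨hf, _⟩)
              exacts [Or.inl he, Or.inr hf]
        · -- u₀ on the b-side
          obtain ⟨t₂', hr₂, he₂⟩ := ih₂ hu₀b (hcomp_v₀ b hu₀b) hDe₀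
          have hu₀Ca : u₀ ∉ comp G S (insert s(a, b) D) a := fun h => hdisj u₀ h hu₀b
          have hCa_in : ∀ x ∈ comp G S (insert s(a, b) D) a, x ∈ Su := by
            intro x hx
            exact (hkey a hu₀Ca x hx).mpr hab
          have hrB : restrict (Su ∩ S) t₂ = some t₂' := by
            have hcg := restrict_congr (W₁ := Su ∩ S)
              (W₂ := Su ∩ comp G S (insert s(a, b) D) b) h₂
              (fun x hx => ⟨fun h => ⟨h.1, hx⟩, fun h => ⟨h.1, hCbS hx⟩⟩)
            exact hcg.trans hr₂
          have hrA : restrict (Su ∩ S) t₁ = some t₁ := by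
            have hcg := restrict_congr (W₁ := Su ∩ S)
              (W₂ := comp G S (insert s(a, b) D) a) h₁
              (fun x hx => ⟨fun _ => hx, fun _ => ⟨hCa_in x hx, hCaS hx⟩⟩)
            exact hcg.trans (restrict_all h₁ (fun x hx => hx))
          have hCaeq : Su ∩ comp G S (insert s(a, b) D) a
              = comp G S (insert s(a, b) D) a :=
            Set.inter_eq_right.mpr hCa_in
          refine ⟨.node2 s(a, b) t₁ t₂', by simp only [restrict, hrA, hrB], ?_⟩
          refine IsEPT.node2 a b _ _ t₁ t₂' hadjE ⟨hab, haS⟩ ⟨hbSu, hbS⟩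
            (fun hx => hDe hx.1) ?_ ?_ ?_ ?_
          · intro hr
            apply hdiff
            obtain ⟨w⟩ := hr
            exact ⟨w.mapLe hleH'⟩
          · rw [hcA, hcB, ← Set.inter_union_distrib_left, hcover]
          · rw [hcA, hCaeq]
            refine ept_congr_D h₁ _ ?_
            intro p q hpq hp hq
            simp only [Set.mem_insert_iff, Set.mem_setOf_eq]
            constructor
            · rintro (he | hf)
              · exact Or.inl he
              · refine Or.inr ⟨hf, ?_⟩
                intro x hx
                rcases Sym2.mem_iff.mp hx with rfl | rfl
                exacts [hCa_in x hp, hCa_in x hq]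
            · rintro (he | ⟨hf, _⟩)
              exacts [Or.inl he, Or.inr hf]
          · rw [hcB, ← hDins]; exact he₂
      · -- both endpoints outside Su : the node is dropped
        have hbSu : b ∉ Su := fun h => hab (habSu.mpr h)
        have hDnotins : {f | f ∈ insert s(a, b) D ∧ ∀ x ∈ f, x ∈ Su}
            = {f | f ∈ D ∧ ∀ x ∈ f, x ∈ Su} := by
          ext f
          simp only [Set.mem_insert_iff, Set.mem_setOf_eq]
          constructor
          · rintro ⟨he | hf, hins⟩
            · exact absurd (hins a (by rw [he]; exact Sym2.mem_iff.mpr (Or.inl rfl))) hab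
            · exact ⟨hf, hins⟩
          · rintro ⟨hf, hins⟩; exact ⟨Or.inr hf, hins⟩
        have hnc : ¬ ∀ x ∈ s(a, b), x ∈ Su ∩ S := fun hall =>
          hab (hall a (Sym2.mem_iff.mpr (Or.inl rfl))).1
        rcases hu₀S with hu₀a | hu₀b
        · obtain ⟨t₁', hr₁, he₁⟩ := ih₁ hu₀a (hcomp_v₀ a hu₀a) hDe₀
          rw [hDnotins] at he₁
          have hu₀Cb : u₀ ∉ comp G S (insert s(a, b) D) b := fun h => hdisj u₀ hu₀a h
          have hCb_out : ∀ x ∈ comp G S (insert s(a, b) D) b, x ∉ Su := by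
            intro x hx hxSu
            exact hbSu ((hkey b hu₀Cb x hx).mp hxSu)
          have hrB : restrict (Su ∩ S) t₂ = none :=
            restrict_none h₂ (fun x hx hw => hCb_out x hx hw.1)
          have hrA : restrict (Su ∩ S) t₁ = some t₁' := by
            have hcg := restrict_congr (W₁ := Su ∩ S)
              (W₂ := Su ∩ comp G S (insert s(a, b) D) a) h₁
              (fun x hx => ⟨fun h => ⟨h.1, hx⟩, fun h => ⟨h.1, hCaS hx⟩⟩)
            exact hcg.trans hr₁
          have hS' : Su ∩ S = Su ∩ comp G S (insert s(a, b) D) a := by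
            ext x
            constructor
            · rintro ⟨h1, h2⟩
              rw [← hcover] at h2
              rcases h2 with h2 | h2
              · exact ⟨h1, h2⟩
              · exact absurd h1 (hCb_out x h2)
            · rintro ⟨h1, h2⟩
              exact ⟨h1, hCaS h2⟩
          refine ⟨t₁', ?_, ?_⟩
          · simp only [restrict, hrA, hrB]
            rw [if_neg hnc]
          · rw [hS']; exact he₁
        · obtain ⟨t₂', hr₂, he₂⟩ := ih₂ hu₀b (hcomp_v₀ b hu₀b) hDe₀
          rw [hDnotins] at he₂
          have hu₀Ca : u₀ ∉ comp G S (insert s(a, b) D) a := fun h => hdisj u₀ h hu₀b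
          have hCa_out : ∀ x ∈ comp G S (insert s(a, b) D) a, x ∉ Su := by
            intro x hx hxSu
            exact hab ((hkey a hu₀Ca x hx).mp hxSu)
          have hrA : restrict (Su ∩ S) t₁ = none :=
            restrict_none h₁ (fun x hx hw => hCa_out x hx hw.1)
          have hrB : restrict (Su ∩ S) t₂ = some t₂' := by
            have hcg := restrict_congr (W₁ := Su ∩ S)
              (W₂ := Su ∩ comp G S (insert s(a, b) D) b) h₂
              (fun x hx => ⟨fun h => ⟨h.1, hx⟩, fun h => ⟨h.1, hCbS hx⟩⟩)
            exact hcg.trans hr₂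
          have hS' : Su ∩ S = Su ∩ comp G S (insert s(a, b) D) b := by
            ext x
            constructor
            · rintro ⟨h1, h2⟩
              rw [← hcover] at h2
              rcases h2 with h2 | h2
              · exact absurd h1 (hCa_out x h2)
              · exact ⟨h1, h2⟩
            · rintro ⟨h1, h2⟩
              exact ⟨h1, hCbS h2⟩
          refine ⟨t₂', ?_, ?_⟩
          · simp only [restrict, hrA, hrB]
            rw [if_neg hnc]
          · rw [hS']; exact he₂

end MainSplit

/-- Splitting an EPT `T` of a tree `G` along an edge `uv` yields EPTs
`T^u`, `T^v` of the two components `G_u`, `G_v` of `G \ uv`. -/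
theorem splitting_isEPT [Fintype V] (G : SimpleGraph V) (hG : G.IsTree)
    (u v : V) (huv : G.Adj u v)
    (T : LTree V) (hT : IsEPT G Set.univ ∅ T)
    (Su Sv : Set V)
    (hSu : Su = ((G.deleteEdges {s(u, v)}).connectedComponentMk u).supp)
    (hSv : Sv = ((G.deleteEdges {s(u, v)}).connectedComponentMk v).supp)
    (Tu Tv : LTree V)
    (hTu : restrict Su T = some Tu) (hTv : restrict Sv T = some Tv) :
    IsEPT G Su ∅ Tu ∧ IsEPT G Sv ∅ Tv := by
  have hac : G.IsAcyclic := hG.IsAcyclic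
  have hbr := (SimpleGraph.isAcyclic_iff_forall_adj_isBridge.mp hac) huv
  have hnr : ¬ (G.deleteEdges {s(u, v)}).Reachable u v :=
    (SimpleGraph.isBridge_iff.mp hbr)
  have hDempty : ∀ W : Set V, {f | f ∈ (∅ : Set (Sym2 V)) ∧ ∀ x ∈ f, x ∈ W}
      = (∅ : Set (Sym2 V)) := by
    intro W; ext f; simp
  constructor
  · -- the u side
    have hgood : ∀ ⦃a b⦄, G.Adj a b → s(a, b) ≠ s(u, v) → (a ∈ Su ↔ b ∈ Su) := by
      intro a b hab hne
      have hadj' : (G.deleteEdges {s(u, v)}).Adj a b := by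
        rw [SimpleGraph.deleteEdges_adj]
        exact ⟨hab, by simpa using hne⟩
      have heq := SimpleGraph.ConnectedComponent.eq.mpr hadj'.reachable
      rw [hSu, SimpleGraph.ConnectedComponent.mem_supp_iff,
        SimpleGraph.ConnectedComponent.mem_supp_iff, heq]
    have huSu : u ∈ Su := by
      rw [hSu, SimpleGraph.ConnectedComponent.mem_supp_iff]
    have hvSu : v ∉ Su := by
      rw [hSu, SimpleGraph.ConnectedComponent.mem_supp_iff,
        SimpleGraph.ConnectedComponent.eq]
      exact fun hr => hnr hr.symm
    obtain ⟨t', hres, hept⟩ := main_split hgood huv huSu hvSu hT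
      (Set.mem_univ u) (Set.mem_univ v) (Set.notMem_empty _)
    rw [Set.inter_univ, hTu] at hres
    rw [Set.inter_univ, hDempty] at hept
    obtain rfl : t' = Tu := (Option.some_injective _ hres.symm)
    exact hept
  · -- the v side
    have hgood : ∀ ⦃a b⦄, G.Adj a b → s(a, b) ≠ s(v, u) → (a ∈ Sv ↔ b ∈ Sv) := by
      intro a b hab hne
      have hadj' : (G.deleteEdges {s(u, v)}).Adj a b := by
        rw [SimpleGraph.deleteEdges_adj]
        refine ⟨hab, ?_⟩
        simp only [Set.mem_singleton_iff]
        intro he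
        exact hne (by rw [he, Sym2.eq_swap])
      have heq := SimpleGraph.ConnectedComponent.eq.mpr hadj'.reachable
      rw [hSv, SimpleGraph.ConnectedComponent.mem_supp_iff,
        SimpleGraph.ConnectedComponent.mem_supp_iff, heq]
    have hvSv : v ∈ Sv := by
      rw [hSv, SimpleGraph.ConnectedComponent.mem_supp_iff]
    have huSv : u ∉ Sv := by
      rw [hSv, SimpleGraph.ConnectedComponent.mem_supp_iff,
        SimpleGraph.ConnectedComponent.eq]
      exact hnr
    obtain ⟨t', hres, hept⟩ := main_split hgood huv.symm hvSv huSv hT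
      (Set.mem_univ v) (Set.mem_univ u) (Set.notMem_empty _)
    rw [Set.inter_univ, hTv] at hres
    rw [Set.inter_univ, hDempty] at hept
    obtain rfl : t' = Tv := (Option.some_injective _ hres.symm)
    exact hept
end

section
/- Let G be a tree, T an EPT of G, and (T^u, T^v) the splitting of T along an edge uv ∈ E(G). Then EPT-sum(G_u, T^u) + EPT-sum(G_v, T^v) < EPT-sum(G, T). -/
open scoped Classical

variable {V : Type*}

/-- The number of leaves of a rooted tree. -/
def nleaves : LTree V → ℕ
  | .leaf _ => 1
  | .node1 _ t => nleaves t
  | .node2 _ l r => nleaves l + nleaves r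

/-- The EPT-sum of a rooted tree: the sum over internal nodes `e` of the
number of leaves of the subtree rooted at `e` (equivalently, the sum of the
depths of the leaves). -/
def esum : LTree V → ℕ
  | .leaf _ => 0
  | .node1 _ t => esum t + nleaves t
  | .node2 _ l r => esum l + esum r + (nleaves l + nleaves r)

noncomputable def rn (S : Set V) (t : LTree V) : ℕ := (restrict S t).elim 0 nleaves

noncomputable def re (S : Set V) (t : LTree V) : ℕ := (restrict S t).elim 0 esum

lemma nleaves_pos (t : LTree V) : 0 < nleaves t := by
  induction t with
  | leaf v => simp [nleaves]
  | node1 e t ih => simpa [nleaves] using ih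
  | node2 e l r ihl ihr => simp only [nleaves]; omega

lemma rn_none {S : Set V} {t : LTree V} (h : restrict S t = none) : rn S t = 0 := by
  simp [rn, h]

lemma re_none {S : Set V} {t : LTree V} (h : restrict S t = none) : re S t = 0 := by
  simp [re, h]

lemma rn_pos' {S : Set V} {t : LTree V} (h : restrict S t ≠ none) : 1 ≤ rn S t := by
  rcases hr : restrict S t with _ | a
  · exact (h hr).elim
  · have := nleaves_pos a
    simp [rn, hr]; omega

lemma rn_node1 (S : Set V) (e : Sym2 V) (t : LTree V) : rn S (.node1 e t) = rn S t := by
  unfold rn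
  rcases h : restrict S t with _ | a
  · simp [restrict, h]
  · by_cases hc : ∀ x ∈ e, x ∈ S
    · simp [restrict, h, if_pos hc, nleaves]
    · simp [restrict, h, if_neg hc, nleaves]

lemma rn_node2 (S : Set V) (e : Sym2 V) (l r : LTree V) :
    rn S (.node2 e l r) = rn S l + rn S r := by
  unfold rn
  rcases hl : restrict S l with _ | a <;> rcases hr : restrict S r with _ | b
  · simp [restrict, hl, hr]
  · simp only [restrict, hl, hr]
    by_cases hc : ∀ x ∈ e, x ∈ S
    · simp [if_pos hc, nleaves]
    · simp [if_neg hc, nleaves]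
  · simp only [restrict, hl, hr]
    by_cases hc : ∀ x ∈ e, x ∈ S
    · simp [if_pos hc, nleaves]
    · simp [if_neg hc, nleaves]
  · simp [restrict, hl, hr, nleaves]

lemma rn_le (S : Set V) (t : LTree V) : rn S t ≤ nleaves t := by
  induction t with
  | leaf v => by_cases h : v ∈ S <;> simp [rn, restrict, h, nleaves]
  | node1 e t ih => rw [rn_node1]; simpa [nleaves] using ih
  | node2 e l r ihl ihr => rw [rn_node2]; simp only [nleaves]; omega

lemma rn_add_le {S₁ S₂ : Set V} (hd : ∀ x, x ∈ S₁ → x ∈ S₂ → False) (t : LTree V) :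
    rn S₁ t + rn S₂ t ≤ nleaves t := by
  induction t with
  | leaf v =>
      by_cases h1 : v ∈ S₁ <;> by_cases h2 : v ∈ S₂
      · exact (hd v h1 h2).elim
      all_goals simp [rn, restrict, h1, h2, nleaves]
  | node1 e t ih => rw [rn_node1, rn_node1]; simpa [nleaves] using ih
  | node2 e l r ihl ihr => rw [rn_node2, rn_node2]; simp only [nleaves]; omega

lemma not_both_subset {S₁ S₂ : Set V} (hd : ∀ x, x ∈ S₁ → x ∈ S₂ → False) (e : Sym2 V)
    (h1 : ∀ x ∈ e, x ∈ S₁) (h2 : ∀ x ∈ e, x ∈ S₂) : False := by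
  induction e using Sym2.ind with
  | _ x y => exact hd x (h1 x (by simp)) (h2 x (by simp))

lemma re_node1_le (S : Set V) (e : Sym2 V) (t : LTree V) :
    re S (.node1 e t) ≤ re S t + (if ∀ x ∈ e, x ∈ S then rn S t else 0) := by
  unfold re rn
  rcases h : restrict S t with _ | a
  · simp [restrict, h]
  · simp only [restrict, h]
    by_cases hc : ∀ x ∈ e, x ∈ S
    · simp [if_pos hc, esum, nleaves]
    · simp [if_neg hc, esum]

lemma re_node2_le (S : Set V) (e : Sym2 V) (l r : LTree V) :
    re S (.node2 e l r) ≤ re S l + re S r + rn S l + rn S r := by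
  unfold re rn
  rcases hl : restrict S l with _ | a <;> rcases hr : restrict S r with _ | b
  · simp [restrict, hl, hr]
  · simp only [restrict, hl, hr]
    by_cases hc : ∀ x ∈ e, x ∈ S
    · simp [if_pos hc, esum, nleaves] <;> omega
    · simp [if_neg hc, esum] <;> omega
  · simp only [restrict, hl, hr]
    by_cases hc : ∀ x ∈ e, x ∈ S
    · simp [if_pos hc, esum, nleaves] <;> omega
    · simp [if_neg hc, esum] <;> omega
  · simp [restrict, hl, hr, esum, nleaves] <;> omega

lemma re_node2_bound2 (S : Set V) (e : Sym2 V) (l r : LTree V)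
    (hc : ¬ ∀ x ∈ e, x ∈ S) (h : restrict S l = none ∨ restrict S r = none) :
    re S (.node2 e l r) ≤ re S l + re S r := by
  unfold re
  rcases hl : restrict S l with _ | a <;> rcases hr : restrict S r with _ | b
  · simp [restrict, hl, hr]
  · simp [restrict, hl, hr, if_neg hc, esum]
  · simp [restrict, hl, hr, if_neg hc, esum]
  · rw [hl, hr] at h
    rcases h with h | h <;> simp at h

lemma re_le (S : Set V) (t : LTree V) : re S t ≤ esum t := by
  induction t with
  | leaf v => by_cases h : v ∈ S <;> simp [re, restrict, h, esum]
  | node1 e t ih =>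
      have h1 := re_node1_le S e t
      have h2 := rn_le S t
      have h3 : (if ∀ x ∈ e, x ∈ S then rn S t else 0) ≤ rn S t := by split <;> omega
      simp only [esum]; omega
  | node2 e l r ihl ihr =>
      have h1 := re_node2_le S e l r
      have h2 := rn_le S l
      have h3 := rn_le S r
      simp only [esum]; omega

lemma re_add_le {S₁ S₂ : Set V} (hd : ∀ x, x ∈ S₁ → x ∈ S₂ → False) (t : LTree V) :
    re S₁ t + re S₂ t ≤ esum t := by
  induction t with
  | leaf v =>
      by_cases h1 : v ∈ S₁ <;> by_cases h2 : v ∈ S₂ <;>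
        simp [re, restrict, h1, h2, esum]
  | node1 e t ih =>
      have h1 := re_node1_le S₁ e t
      have h2 := re_node1_le S₂ e t
      have h3 := rn_add_le hd t
      have h4 : (if ∀ x ∈ e, x ∈ S₁ then rn S₁ t else 0) ≤ rn S₁ t := by split <;> omega
      have h5 : (if ∀ x ∈ e, x ∈ S₂ then rn S₂ t else 0) ≤ rn S₂ t := by split <;> omega
      simp only [esum]; omega
  | node2 e l r ihl ihr =>
      have h1 := re_node2_le S₁ e l r
      have h2 := re_node2_le S₂ e l r
      have h3 := rn_add_le hd l
      have h4 := rn_add_le hd r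
      simp only [esum]; omega

lemma re_add_lt {S₁ S₂ : Set V} (hd : ∀ x, x ∈ S₁ → x ∈ S₂ → False) (t : LTree V)
    (h₁ : restrict S₁ t ≠ none) (h₂ : restrict S₂ t ≠ none) :
    re S₁ t + re S₂ t + 1 ≤ esum t := by
  induction t with
  | leaf v =>
      by_cases hv1 : v ∈ S₁
      · by_cases hv2 : v ∈ S₂
        · exact (hd v hv1 hv2).elim
        · exact (h₂ (by simp [restrict, hv2])).elim
      · exact (h₁ (by simp [restrict, hv1])).elim
  | node1 e t ih =>
      have k₁ : restrict S₁ t ≠ none := by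
        intro h; exact h₁ (by simp [restrict, h])
      have k₂ : restrict S₂ t ≠ none := by
        intro h; exact h₂ (by simp [restrict, h])
      have e₁ := re_node1_le S₁ e t
      have e₂ := re_node1_le S₂ e t
      have r12 := rn_add_le hd t
      have hre := re_add_le hd t
      have p₁ := rn_pos' k₁
      have p₂ := rn_pos' k₂
      simp only [esum]
      split_ifs at e₁ e₂ with c₁ c₂ c₂
      · exact (not_both_subset hd e c₁ c₂).elim
      all_goals omega
  | node2 e l r ihl ihr =>
      have k₁ : restrict S₁ l ≠ none ∨ restrict S₁ r ≠ none := by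
        by_contra h
        push_neg at h
        exact h₁ (by simp [restrict, h.1, h.2])
      have k₂ : restrict S₂ l ≠ none ∨ restrict S₂ r ≠ none := by
        by_contra h
        push_neg at h
        exact h₂ (by simp [restrict, h.1, h.2])
      by_cases hsh : (restrict S₁ l ≠ none ∧ restrict S₂ l ≠ none) ∨
          (restrict S₁ r ≠ none ∧ restrict S₂ r ≠ none)
      · rcases hsh with ⟨hl₁, hl₂⟩ | ⟨hr₁, hr₂⟩
        · have hih := ihl hl₁ hl₂
          have hrr := re_add_le hd r
          have b₁ := re_node2_le S₁ e l r
          have b₂ := re_node2_le S₂ e l r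
          have m1 := rn_add_le hd l
          have m2 := rn_add_le hd r
          simp only [esum]; omega
        · have hih := ihr hr₁ hr₂
          have hll := re_add_le hd l
          have b₁ := re_node2_le S₁ e l r
          have b₂ := re_node2_le S₂ e l r
          have m1 := rn_add_le hd l
          have m2 := rn_add_le hd r
          simp only [esum]; omega
      · push_neg at hsh
        obtain ⟨hshl, hshr⟩ := hsh
        -- in each case, determine the full pattern
        by_cases h1l : restrict S₁ l = none
        · have h1r : restrict S₁ r ≠ none := k₁.resolve_left (fun h => h h1l)
          have h2r : restrict S₂ r = none := hshr h1r
          have h2l : restrict S₂ l ≠ none := k₂.resolve_right (fun h => h h2r)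
          by_cases c₁ : ∀ x ∈ e, x ∈ S₁
          · have c₂ : ¬ ∀ x ∈ e, x ∈ S₂ := fun c₂ => not_both_subset hd e c₁ c₂
            have b₁ := re_node2_le S₁ e l r
            have b₂ := re_node2_bound2 S₂ e l r c₂ (Or.inr h2r)
            have u1 := re_le S₁ r
            have u2 := re_le S₂ l
            have u3 := rn_le S₁ r
            have z1 := re_none h1l
            have z2 := rn_none h1l
            have z3 := re_none h2r
            have np := nleaves_pos l
            simp only [esum]; omega
          · have b₁ := re_node2_bound2 S₁ e l r c₁ (Or.inl h1l)
            have b₂ := re_node2_le S₂ e l r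
            have u1 := re_le S₁ r
            have u2 := re_le S₂ l
            have u3 := rn_le S₂ l
            have z1 := re_none h1l
            have z3 := re_none h2r
            have z4 := rn_none h2r
            have np := nleaves_pos r
            simp only [esum]; omega
        · have h1r : restrict S₁ l ≠ none := h1l
          have h2l : restrict S₂ l = none := hshl h1r
          have h2r : restrict S₂ r ≠ none := k₂.resolve_left (fun h => h h2l)
          by_cases c₁ : ∀ x ∈ e, x ∈ S₁
          · have c₂ : ¬ ∀ x ∈ e, x ∈ S₂ := fun c₂ => not_both_subset hd e c₁ c₂
            have b₁ := re_node2_le S₁ e l r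
            have b₂ := re_node2_bound2 S₂ e l r c₂ (Or.inl h2l)
            have u1 := re_le S₁ l
            have u2 := re_le S₂ r
            have u3 := rn_le S₁ l
            have hr1 : restrict S₁ r = none := by
              by_contra h; exact h2r (hshr h)
            have z1 := re_none hr1
            have z2 := rn_none hr1
            have z3 := re_none h2l
            have np := nleaves_pos r
            simp only [esum]; omega
          · have hr1 : restrict S₁ r = none := by
              by_contra h; exact h2r (hshr h)
            have b₁ := re_node2_bound2 S₁ e l r c₁ (Or.inr hr1)
            have b₂ := re_node2_le S₂ e l r
            have u1 := re_le S₁ l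
            have u2 := re_le S₂ r
            have u3 := rn_le S₂ r
            have z1 := re_none hr1
            have z3 := re_none h2l
            have z4 := rn_none h2l
            have np := nleaves_pos l
            simp only [esum]; omega

/-- Splitting an EPT `T` of a tree `G` along an edge `uv` strictly decreases
the total EPT-sum: `EPT-sum(G_u, T^u) + EPT-sum(G_v, T^v) < EPT-sum(G, T)`. -/
theorem splitting_eptSum_lt [Fintype V] (G : SimpleGraph V) (hG : G.IsTree)
    (u v : V) (huv : G.Adj u v)
    (T : LTree V) (hT : IsEPT G Set.univ ∅ T)
    (Su Sv : Set V)
    (hSu : Su = ((G.deleteEdges {s(u, v)}).connectedComponentMk u).supp)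
    (hSv : Sv = ((G.deleteEdges {s(u, v)}).connectedComponentMk v).supp)
    (Tu Tv : LTree V)
    (hTu : restrict Su T = some Tu) (hTv : restrict Sv T = some Tv) :
    esum Tu + esum Tv < esum T := by
  have hd : ∀ x, x ∈ Su → x ∈ Sv → False := by
    intro x hxu hxv
    have hb : G.IsBridge s(u, v) :=
      (SimpleGraph.isAcyclic_iff_forall_adj_isBridge.mp hG.IsAcyclic) huv
    have hnr : ¬ (G.deleteEdges {s(u, v)}).Reachable u v := hb
    rw [hSu, SimpleGraph.ConnectedComponent.mem_supp_iff] at hxu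
    rw [hSv, SimpleGraph.ConnectedComponent.mem_supp_iff] at hxv
    exact hnr ((SimpleGraph.ConnectedComponent.exact (hxu.symm.trans hxv)))
  have h1 : restrict Su T ≠ none := by rw [hTu]; simp
  have h2 : restrict Sv T ≠ none := by rw [hTv]; simp
  have key := re_add_lt hd T h1 h2
  have e1 : re Su T = esum Tu := by simp [re, hTu]
  have e2 : re Sv T = esum Tv := by simp [re, hTv]
  omega
end
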